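/- Let X be a continuum with at least two points. Then no nonempty open subset U of X is zero-dimensional; that is, the subspace U does not have a topological basis consisting of sets that are clopen in U. -/

import Mathlib

/-- A topological space is zero-dimensional if its topology has a basis of
clopen sets. -/
def ZeroDimensional (Y : Type*) [TopologicalSpace Y] : Prop :=
  ∃ b : Set (Set Y), TopologicalSpace.IsTopologicalBasis b ∧ ∀ s ∈ b, IsClopen s

/-- No nonempty open subset of a continuum (with at least two points) is
zero-dimensional. -/
theorem not_zeroDimensional_of_open_subset_of_continuum
    (X : Type*) [TopologicalSpace X] [CompactSpace X] [TopologicalSpace.MetrizableSpace X]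
    [ConnectedSpace X] [Nontrivial X]
    (U : Set X) (hU : IsOpen U) (hUne : U.Nonempty) :
    ¬ ZeroDimensional ↥U := by
  letI : MetricSpace X := TopologicalSpace.metrizableSpaceMetric X
  rintro ⟨b, hb, hclopen⟩
  obtain ⟨x, hx⟩ := hUne
  obtain ⟨y, hy⟩ := exists_ne x
  -- U \ {y} is an open neighborhood of x
  have hUy : IsOpen (U \ {y}) := hU.sdiff isClosed_singleton
  have hxUy : x ∈ U \ {y} := ⟨hx, by simpa using (Ne.symm hy)⟩
  -- a closed neighborhood t of x inside U \ {y}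
  obtain ⟨t, htn, htc, hts⟩ :=
    exists_mem_nhds_isClosed_subset (hUy.mem_nhds hxUy)
  -- interior t pulled back to U is open there and contains x
  have hxt : (⟨x, hx⟩ : U) ∈ (Subtype.val ⁻¹' interior t : Set U) :=
    mem_interior_iff_mem_nhds.2 htn
  have hopen : IsOpen (Subtype.val ⁻¹' interior t : Set U) :=
    isOpen_interior.preimage continuous_subtype_val
  obtain ⟨V, hVb, hxV, hVsub⟩ := hb.exists_subset_of_mem_open hxt hopen
  have hVclopen : IsClopen V := hclopen V hVb
  set S : Set X := Subtype.val '' V with hS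
  -- S ⊆ interior t ⊆ t ⊆ U \ {y}
  have hSt : S ⊆ t := by
    rintro _ ⟨v, hv, rfl⟩
    exact interior_subset (hVsub hv)
  have hSU : S ⊆ U := fun z hz => (hts (hSt hz)).1
  -- S is open in X
  have hSopen : IsOpen S := hU.isOpenMap_subtype_val V hVclopen.2
  -- S is closed in X
  have hSclosed : IsClosed S := by
    rw [← closure_eq_iff_isClosed]
    refine Set.Subset.antisymm ?_ subset_closure
    intro z hz
    have hzt : z ∈ t := htc.closure_subset_iff.2 hSt hz
    have hzU : z ∈ U := (hts hzt).1
    have : (⟨z, hzU⟩ : U) ∈ closure V := by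
      rw [Topology.IsEmbedding.subtypeVal.closure_eq_preimage_closure_image V]
      exact hz
    rw [hVclopen.1.closure_eq] at this
    exact ⟨⟨z, hzU⟩, this, rfl⟩
  -- contradiction with connectedness
  have hne : S.Nonempty := ⟨x, ⟨x, hx⟩, hxV, rfl⟩
  have hproper : S ≠ Set.univ := by
    intro h
    have : y ∈ S := h ▸ Set.mem_univ y
    exact (hts (hSt this)).2 rfl
  rcases isClopen_iff.1 ⟨hSclosed, hSopen⟩ with h | h
  · exact hne.ne_empty h
  · exact hproper h
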